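/- Let u ∈ ℂ^m, r ∈ ℂ^n, w ∈ ℂ^n, s ∈ ℂ^m with u ≠ 0, w ≠ 0, and uᴴ s = rᴴ w. Then the matrix Δ := (r uᴴ)/‖u‖² + (w sᴴ)/‖w‖² - ((sᴴ u) w uᴴ)/(‖w‖² ‖u‖²) satisfies Δ u = r and Δᴴ w = s. -/

import Mathlib

open Matrix

/-- Euclidean norm of a complex vector. -/
noncomputable def enorm {n : ℕ} (x : Fin n → ℂ) : ℝ := Real.sqrt (∑ i, ‖x i‖ ^ 2)

/-- The complex inner product `xᴴ y` of two vectors. -/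
noncomputable def dotH {n : ℕ} (x y : Fin n → ℂ) : ℂ :=
  ∑ i, (starRingEnd ℂ) (x i) * y i

lemma enorm_sq_eq {k : ℕ} (x : Fin k → ℂ) : ((enorm x : ℂ)) ^ 2 = dotH x x := by
  unfold _root_.enorm dotH
  rw [← Complex.ofReal_pow, Real.sq_sqrt (by positivity), Complex.ofReal_sum]
  refine Finset.sum_congr rfl fun i _ => ?_
  rw [mul_comm, Complex.mul_conj, Complex.normSq_eq_norm_sq]

lemma dotH_self_ne_zero {k : ℕ} {x : Fin k → ℂ} (hx : x ≠ 0) : dotH x x ≠ 0 := by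
  rw [← enorm_sq_eq]
  have : _root_.enorm x ≠ 0 := by
    unfold _root_.enorm
    obtain ⟨i, hi⟩ := Function.ne_iff.mp hx
    have : (0:ℝ) < ∑ j, ‖x j‖ ^ 2 :=
      Finset.sum_pos' (fun j _ => by positivity)
        ⟨i, Finset.mem_univ i, by simpa using pow_pos (norm_pos_iff.mpr hi) 2⟩
    positivity
  simpa using pow_ne_zero 2 (Complex.ofReal_ne_zero.mpr this)

theorem matrix_mapping_solution {n m : ℕ}
    (u : Fin m → ℂ) (r : Fin n → ℂ) (w : Fin n → ℂ) (s : Fin m → ℂ)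
    (hu : u ≠ 0) (hw : w ≠ 0) (h : dotH u s = dotH r w)
    (Δ : Matrix (Fin n) (Fin m) ℂ)
    (hΔ : Δ = fun i j =>
      r i * (starRingEnd ℂ) (u j) / (enorm u : ℂ) ^ 2
        + w i * (starRingEnd ℂ) (s j) / (enorm w : ℂ) ^ 2
        - dotH s u * (w i * (starRingEnd ℂ) (u j)) / ((enorm w : ℂ) ^ 2 * (enorm u : ℂ) ^ 2)) :
    Δ.mulVec u = r ∧ Δᴴ.mulVec w = s := by
  have hU : ((enorm u : ℂ)) ^ 2 = dotH u u := enorm_sq_eq u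
  have hW : ((enorm w : ℂ)) ^ 2 = dotH w w := enorm_sq_eq w
  have hU0 : dotH u u ≠ 0 := dotH_self_ne_zero hu
  have hW0 : dotH w w ≠ 0 := dotH_self_ne_zero hw
  subst hΔ
  constructor
  · ext i
    simp only [mulVec, dotProduct, of_apply, hU, hW]
    have expand : ∀ j, (r i * (starRingEnd ℂ) (u j) / dotH u u
        + w i * (starRingEnd ℂ) (s j) / dotH w w
        - dotH s u * (w i * (starRingEnd ℂ) (u j)) / (dotH w w * dotH u u)) * u j
      = (r i / dotH u u) * ((starRingEnd ℂ) (u j) * u j)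
        + (w i / dotH w w) * ((starRingEnd ℂ) (s j) * u j)
        - (dotH s u * w i / (dotH w w * dotH u u)) * ((starRingEnd ℂ) (u j) * u j) := by
      intro j; ring
    rw [Finset.sum_congr rfl fun j _ => expand j]
    rw [Finset.sum_sub_distrib, Finset.sum_add_distrib, ← Finset.mul_sum, ← Finset.mul_sum,
      ← Finset.mul_sum]
    show _ * dotH u u + _ * dotH s u - _ * dotH u u = r i
    field_simp
    ring
  · ext j
    simp only [mulVec, dotProduct, conjTranspose_apply, hU, hW]
    simp only [Matrix.conjTranspose, Matrix.transpose, Matrix.map_apply, Matrix.of_apply]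
    have expand : ∀ i, star (r i * (starRingEnd ℂ) (u j) / dotH u u
        + w i * (starRingEnd ℂ) (s j) / dotH w w
        - dotH s u * (w i * (starRingEnd ℂ) (u j)) / (dotH w w * dotH u u)) * w i
      = (u j / star (dotH u u)) * ((starRingEnd ℂ) (r i) * w i)
        + (s j / star (dotH w w)) * ((starRingEnd ℂ) (w i) * w i)
        - (star (dotH s u) * u j / (star (dotH w w) * star (dotH u u)))
            * ((starRingEnd ℂ) (w i) * w i) := by
      intro i
      simp only [star_sub, star_add, star_div₀, star_mul', starRingEnd_apply, star_star]
      ring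
    rw [Finset.sum_congr rfl fun i _ => expand i]
    rw [Finset.sum_sub_distrib, Finset.sum_add_distrib, ← Finset.mul_sum, ← Finset.mul_sum,
      ← Finset.mul_sum]
    have hsU : star (dotH u u) = dotH u u := by
      unfold dotH; rw [star_sum]
      refine Finset.sum_congr rfl fun i _ => ?_
      simp only [star_mul', starRingEnd_apply, star_star]; ring
    have hsW : star (dotH w w) = dotH w w := by
      unfold dotH; rw [star_sum]
      refine Finset.sum_congr rfl fun i _ => ?_
      simp only [star_mul', starRingEnd_apply, star_star]; ring
    have hsu : star (dotH s u) = dotH u s := by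
      unfold dotH; rw [star_sum]
      refine Finset.sum_congr rfl fun i _ => ?_
      simp only [star_mul', starRingEnd_apply, star_star]; ring
    show _ * dotH r w + _ * dotH w w - _ * dotH w w = s j
    rw [hsU, hsW, hsu, ← h]
    field_simp
    ring
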